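/- If E[Z | G] = p with 0 < p < 1 a.s. and (Y₁,Y₀) ⫫ Z | G, then the conditional expectation of the observed outcome given treatment status recovers the conditional mean of the corresponding potential outcome: E[Z·Y | G] = p·E[Y₁ | G] and E[(1−Z)·Y | G] = (1−p)·E[Y₀ | G], where Y = Z·Y₁ + (1−Z)·Y₀. -/

import Mathlib

open MeasureTheory ProbabilityTheory

lemma condExp_mul_of_binary_condIndepFun
    {Ω : Type*} (G m₃ : MeasurableSpace Ω) {mΩ : MeasurableSpace Ω}
    [StandardBorelSpace Ω] [Nonempty Ω]
    (μ : Measure Ω) [IsProbabilityMeasure μ]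
    (hG : G ≤ mΩ)
    (Z W : Ω → ℝ)
    (hZmeas : Measurable[mΩ] Z) (hZ01 : ∀ ω, Z ω = 0 ∨ Z ω = 1)
    (hWmeas : Measurable[mΩ] W) (hWint : Integrable W μ)
    (hZWint : Integrable (fun ω => Z ω * W ω) μ)
    (hm₃_def : m₃ = G ⊔ MeasurableSpace.comap W inferInstance)
    (hindep : CondIndepFun G hG W Z μ) :
    μ[fun ω => Z ω * W ω | G] =ᵐ[μ] fun ω => (μ[Z | G]) ω * (μ[W | G]) ω := by
  -- basic facts about Z
  have hZ_nonneg : ∀ ω, 0 ≤ Z ω := fun ω => by rcases hZ01 ω with h | h <;> rw [h] <;> norm_num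
  have hZ_le_one : ∀ ω, Z ω ≤ 1 := fun ω => by rcases hZ01 ω with h | h <;> rw [h] <;> norm_num
  have hZint : Integrable Z μ := by
    refine (integrable_const (1 : ℝ)).mono' hZmeas.aestronglyMeasurable ?_
    refine Filter.Eventually.of_forall fun ω => ?_
    rw [Real.norm_eq_abs, abs_of_nonneg (hZ_nonneg ω)]
    exact hZ_le_one ω
  set p : Ω → ℝ := μ[Z | G] with hp_def
  have hp_meas : StronglyMeasurable[G] p := stronglyMeasurable_condExp
  have hp_nonneg : 0 ≤ᵐ[μ] p := condExp_nonneg (Filter.Eventually.of_forall hZ_nonneg)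
  have hp_le_one : p ≤ᵐ[μ] 1 := by
    have h1 : μ[fun _ => (1:ℝ) | G] = fun _ => (1:ℝ) := condExp_const hG 1
    have := condExp_mono (μ := μ) (m := G) hZint (integrable_const (1:ℝ))
      (Filter.Eventually.of_forall hZ_le_one)
    rw [h1] at this
    exact this
  have hp_bound : ∀ᵐ ω ∂μ, ‖p ω‖ ≤ 1 := by
    filter_upwards [hp_nonneg, hp_le_one] with ω h0 h1
    rw [Real.norm_eq_abs, abs_of_nonneg h0]; exact h1
  have hp_int : Integrable p μ := integrable_condExp
  -- Z as an indicator
  set A : Set Ω := Z ⁻¹' {1} with hA_def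
  have hA : MeasurableSet[mΩ] A := hZmeas (measurableSet_singleton 1)
  have hZ_ind : Z = A.indicator (fun _ => (1:ℝ)) := by
    funext ω
    rcases hZ01 ω with h | h
    · rw [Set.indicator_of_notMem (by simp [hA_def, Set.mem_preimage, h]), h]
    · rw [Set.indicator_of_mem (by simpa [hA_def] using h), h]
  -- the σ-algebra generated by G and W
  have hm₃ : m₃ ≤ mΩ := hm₃_def ▸ sup_le hG (measurable_iff_comap_le.mp hWmeas)
  have hG₃ : G ≤ m₃ := hm₃_def ▸ le_sup_left
  have hWm₃ : Measurable[m₃] W := hm₃_def ▸ Measurable.of_comap_le le_sup_right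
  -- π-system generating m₃
  set C : Set (Set Ω) :=
    {t | ∃ g u, MeasurableSet[G] g ∧ MeasurableSet u ∧ t = g ∩ W ⁻¹' u} with hC_def
  have hC_pi : IsPiSystem C := by
    rintro t₁ ⟨g₁, u₁, hg₁, hu₁, rfl⟩ t₂ ⟨g₂, u₂, hg₂, hu₂, rfl⟩ -
    refine ⟨g₁ ∩ g₂, u₁ ∩ u₂, hg₁.inter hg₂, hu₁.inter hu₂, ?_⟩
    ext ω
    simp only [Set.mem_inter_iff, Set.mem_preimage]
    tauto
  have hC_gen : m₃ = MeasurableSpace.generateFrom C := by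
    rw [hm₃_def]
    refine le_antisymm (sup_le ?_ ?_) (MeasurableSpace.generateFrom_le ?_)
    · intro g hg
      exact MeasurableSpace.measurableSet_generateFrom ⟨g, Set.univ, hg, MeasurableSet.univ,
        by simp⟩
    · rintro t ⟨u, hu, rfl⟩
      exact MeasurableSpace.measurableSet_generateFrom ⟨Set.univ, u, MeasurableSet.univ, hu,
        by simp⟩
    · rintro t ⟨g, u, hg, hu, rfl⟩
      refine MeasurableSet.inter ?_ ?_
      · exact (le_sup_left : G ≤ G ⊔ MeasurableSpace.comap W inferInstance) _ hg
      · exact (le_sup_right : MeasurableSpace.comap W inferInstance ≤ _) _ ⟨u, hu, rfl⟩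
  -- key step: E[Z | m₃] = E[Z | G]
  have h_setIntegral : ∀ t, MeasurableSet[m₃] t →
      ∫ x in t, p x ∂μ = ∫ x in t, Z x ∂μ := by
    refine MeasurableSpace.induction_on_inter (m := m₃) hC_gen hC_pi (by simp) ?_ ?_ ?_
    · -- basic case: t = g ∩ W ⁻¹' u
      rintro t ⟨g, u, hg, hu, rfl⟩
      set B : Set Ω := W ⁻¹' u with hB_def
      have hB : MeasurableSet[mΩ] B := hWmeas hu
      have h1B_int : Integrable (B.indicator fun _ => (1:ℝ)) μ :=
        (integrable_const (1:ℝ)).indicator hB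
      have hp1B_int : Integrable (fun x => p x * B.indicator (fun _ => (1:ℝ)) x) μ :=
        h1B_int.bdd_mul (hp_meas.mono hG).aestronglyMeasurable hp_bound
      have hci := (condIndepFun_iff_condExp_inter_preimage_eq_mul (hm' := hG)
        (μ := μ) hWmeas hZmeas).mp hindep u {1} hu (measurableSet_singleton 1)
      have hLHS : ∫ x in (g ∩ B), p x ∂μ
          = ∫ x in g, p x * B.indicator (fun _ => (1:ℝ)) x ∂μ := by
        rw [← setIntegral_indicator hB]
        refine setIntegral_congr_ae (hG _ hg) ?_
        refine Filter.Eventually.of_forall fun x _ => ?_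
        by_cases hx : x ∈ B <;> simp [hx]
      have hRHS : ∫ x in (g ∩ B), Z x ∂μ
          = ∫ x in g, (B ∩ A).indicator (fun _ => (1:ℝ)) x ∂μ := by
        rw [← setIntegral_indicator hB]
        refine setIntegral_congr_ae (hG _ hg) ?_
        refine Filter.Eventually.of_forall fun x _ => ?_
        by_cases hxB : x ∈ B <;> by_cases hxA : x ∈ A <;>
          simp [hxB, hxA, hZ_ind, Set.indicator_of_mem, Set.indicator_of_notMem]
      rw [hLHS, hRHS]
      have h1 : ∫ x in g, (B ∩ A).indicator (fun _ => (1:ℝ)) x ∂μ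
          = ∫ x in g, (μ[(B ∩ A).indicator (fun _ => (1:ℝ)) | G]) x ∂μ :=
        (setIntegral_condExp hG ((integrable_const (1:ℝ)).indicator (hB.inter hA)) hg).symm
      have h2 : ∫ x in g, p x * B.indicator (fun _ => (1:ℝ)) x ∂μ
          = ∫ x in g, (μ[fun x => p x * B.indicator (fun _ => (1:ℝ)) x | G]) x ∂μ :=
        (setIntegral_condExp hG hp1B_int hg).symm
      rw [h1, h2]
      refine setIntegral_congr_ae (hG _ hg) ?_
      have hpull : μ[fun x => p x * B.indicator (fun _ => (1:ℝ)) x | G]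
          =ᵐ[μ] fun x => p x * (μ[B.indicator (fun _ => (1:ℝ)) | G]) x :=
        condExp_mul_of_stronglyMeasurable_left hp_meas hp1B_int h1B_int
      have hAeq : (μ[A.indicator (fun _ => (1:ℝ)) | G]) =ᵐ[μ] p := by
        rw [hp_def, hZ_ind]
      have hkey : (μ[(B ∩ A).indicator (fun _ => (1:ℝ)) | G])
          =ᵐ[μ] fun x => p x * (μ[B.indicator (fun _ => (1:ℝ)) | G]) x := by
        have hci' : (μ[(B ∩ A).indicator (fun _ => (1:ℝ)) | G]) =ᵐ[μ] fun ω =>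
            (μ[B.indicator (fun _ => (1:ℝ)) | G]) ω * (μ[A.indicator (fun _ => (1:ℝ)) | G]) ω :=
          hci
        refine hci'.trans ?_
        filter_upwards [hAeq] with x hx
        rw [hx, mul_comm]
      filter_upwards [hpull, hkey] with x h₁ h₂ _
      rw [h₁, h₂]
    · -- complement
      intro t ht hteq
      have ht' : MeasurableSet[mΩ] t := hm₃ _ ht
      have h₁ := integral_add_compl ht' hp_int
      have h₂ := integral_add_compl ht' hZint
      have h₃ : ∫ x, p x ∂μ = ∫ x, Z x ∂μ := integral_condExp hG
      linarith
    · -- disjoint union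
      intro f hdisj hmeas heq
      rw [integral_iUnion (fun i => hm₃ _ (hmeas i)) hdisj hp_int.integrableOn,
        integral_iUnion (fun i => hm₃ _ (hmeas i)) hdisj hZint.integrableOn]
      exact tsum_congr heq
  have hZm₃ : μ[Z | m₃] =ᵐ[μ] p := by
    refine (ae_eq_condExp_of_forall_setIntegral_eq hm₃ hZint
      (fun s _ _ => hp_int.integrableOn) (fun s hs _ => h_setIntegral s hs) ?_).symm
    exact ((hp_meas.mono hG₃)).aestronglyMeasurable
  -- now the conclusion
  have hpW_int : Integrable (fun x => p x * W x) μ :=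
    hWint.bdd_mul (hp_meas.mono hG).aestronglyMeasurable hp_bound
  refine (ae_eq_condExp_of_forall_setIntegral_eq hG hZWint ?_ ?_ ?_).symm
  · intro s _ _
    exact (integrable_condExp.bdd_mul (hp_meas.mono hG).aestronglyMeasurable
      hp_bound).integrableOn
  · intro s hs _
    have hpull : μ[fun x => p x * W x | G] =ᵐ[μ] fun x => p x * (μ[W | G]) x :=
      condExp_mul_of_stronglyMeasurable_left hp_meas hpW_int hWint
    have h₁ : ∫ x in s, p x * (μ[W | G]) x ∂μ = ∫ x in s, p x * W x ∂μ := by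
      rw [← setIntegral_condExp hG hpW_int hs]
      exact setIntegral_congr_ae (hG _ hs) (hpull.mono fun x hx _ => hx.symm)
    rw [h₁]
    set v : Ω → ℝ := s.indicator W with hv_def
    have hv_meas : StronglyMeasurable[m₃] v :=
      Measurable.stronglyMeasurable (hWm₃.indicator (hG₃ _ hs))
    have hvZ_int : Integrable (fun x => v x * Z x) μ := by
      have : (fun x => v x * Z x) = s.indicator (fun x => Z x * W x) := by
        funext x
        by_cases hx : x ∈ s <;> simp [hv_def, hx, mul_comm]
      rw [this]
      exact hZWint.indicator (hG _ hs)
    have hpullv : μ[fun x => v x * Z x | m₃] =ᵐ[μ] fun x => v x * (μ[Z | m₃]) x :=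
      condExp_mul_of_stronglyMeasurable_left hv_meas hvZ_int hZint
    calc ∫ x in s, p x * W x ∂μ = ∫ x, v x * p x ∂μ := by
          rw [← integral_indicator (hG _ hs)]
          refine integral_congr_ae (Filter.Eventually.of_forall fun x => ?_)
          by_cases hx : x ∈ s <;> simp [hv_def, hx, mul_comm]
      _ = ∫ x, v x * (μ[Z | m₃]) x ∂μ := by
          refine integral_congr_ae ?_
          filter_upwards [hZm₃] with x hx
          rw [hx]
      _ = ∫ x, (μ[fun x => v x * Z x | m₃]) x ∂μ := (integral_congr_ae hpullv).symm
      _ = ∫ x, v x * Z x ∂μ := integral_condExp hm₃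
      _ = ∫ x in s, Z x * W x ∂μ := by
          rw [← integral_indicator (hG _ hs)]
          refine integral_congr_ae (Filter.Eventually.of_forall fun x => ?_)
          by_cases hx : x ∈ s <;> simp [hv_def, hx, mul_comm]
  · exact (hp_meas.mul stronglyMeasurable_condExp).aestronglyMeasurable

/-- Conditional identification: if `E[Z|G] = p` with `0 < p < 1` a.s. and the pair
`(Y₁, Y₀)` is conditionally independent of `Z` given `G`, then for the observed outcome
`Y = Z·Y₁ + (1−Z)·Y₀` one has `E[Z·Y | G] = p·E[Y₁ | G]` and
`E[(1−Z)·Y | G] = (1−p)·E[Y₀ | G]` a.e. -/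
theorem condExp_observed_identification
    {Ω : Type*} {mΩ : MeasurableSpace Ω} [StandardBorelSpace Ω] [Nonempty Ω]
    (μ : Measure Ω) [IsProbabilityMeasure μ]
    (G : MeasurableSpace Ω) (hG : G ≤ mΩ)
    (Z Y₁ Y₀ p Y : Ω → ℝ)
    (hZmeas : Measurable[mΩ] Z)
    (hZ01 : ∀ ω, Z ω = 0 ∨ Z ω = 1)
    (hY₁meas : Measurable[mΩ] Y₁) (hY₀meas : Measurable[mΩ] Y₀)
    (hp : p = μ[Z | G])
    (hpos : ∀ᵐ ω ∂μ, 0 < p ω ∧ p ω < 1)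
    (hY₁int : Integrable Y₁ μ) (hY₀int : Integrable Y₀ μ)
    (hZY₁int : Integrable (fun ω => Z ω * Y₁ ω) μ)
    (hZY₀int : Integrable (fun ω => (1 - Z ω) * Y₀ ω) μ)
    (hY : Y = fun ω => Z ω * Y₁ ω + (1 - Z ω) * Y₀ ω)
    (hindep : CondIndepFun G hG (fun ω => (Y₁ ω, Y₀ ω)) Z μ) :
    (μ[fun ω => Z ω * Y ω | G] =ᵐ[μ] fun ω => p ω * (μ[Y₁ | G]) ω) ∧
      (μ[fun ω => (1 - Z ω) * Y ω | G] =ᵐ[μ] fun ω => (1 - p ω) * (μ[Y₀ | G]) ω) := by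
  subst hp hY
  have hZint : Integrable Z μ := by
    refine (integrable_const (1 : ℝ)).mono' hZmeas.aestronglyMeasurable ?_
    refine Filter.Eventually.of_forall fun ω => ?_
    rcases hZ01 ω with h | h <;> rw [h] <;> norm_num
  have hindep1 : CondIndepFun G hG Y₁ Z μ :=
    hindep.comp measurable_fst measurable_id
  have hindep0 : CondIndepFun G hG Y₀ (fun ω => 1 - Z ω) μ :=
    hindep.comp measurable_snd (measurable_const.sub measurable_id)
  have hZ'meas : Measurable[mΩ] (fun ω => 1 - Z ω) := measurable_const.sub hZmeas
  have hZ'01 : ∀ ω, 1 - Z ω = 0 ∨ 1 - Z ω = 1 := fun ω => by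
    rcases hZ01 ω with h | h <;> rw [h] <;> norm_num
  have h1 := condExp_mul_of_binary_condIndepFun G
    (G ⊔ MeasurableSpace.comap Y₁ inferInstance) μ hG Z Y₁ hZmeas hZ01 hY₁meas hY₁int
    hZY₁int rfl hindep1
  have h2 := condExp_mul_of_binary_condIndepFun G
    (G ⊔ MeasurableSpace.comap Y₀ inferInstance) μ hG (fun ω => 1 - Z ω) Y₀ hZ'meas hZ'01
    hY₀meas hY₀int hZY₀int rfl hindep0
  have h3 : μ[fun ω => (1:ℝ) - Z ω | G] =ᵐ[μ] fun ω => 1 - (μ[Z | G]) ω := by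
    have h := condExp_sub (μ := μ) (m := G) (integrable_const (1:ℝ)) hZint
    rw [condExp_const hG] at h
    have heq : (fun ω => (1:ℝ) - Z ω) = (fun _ => (1:ℝ)) - Z := rfl
    rw [heq]
    filter_upwards [h] with ω hω
    simpa using hω
  constructor
  · have hZY : (fun ω => Z ω * (Z ω * Y₁ ω + (1 - Z ω) * Y₀ ω)) = fun ω => Z ω * Y₁ ω := by
      funext ω; rcases hZ01 ω with h | h <;> rw [h] <;> ring
    rw [hZY]
    exact h1
  · have hZY : (fun ω => (1 - Z ω) * (Z ω * Y₁ ω + (1 - Z ω) * Y₀ ω))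
        = fun ω => (1 - Z ω) * Y₀ ω := by
      funext ω; rcases hZ01 ω with h | h <;> rw [h] <;> ring
    rw [hZY]
    refine h2.trans ?_
    filter_upwards [h3] with ω hω
    rw [hω]
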